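/- Auto-calibration of conditional laws (tower-property claim): Let Y be a target random variable taking values in a measurable space, let Z be any random variable jointly distributed with Y, and define the random probability measure W = P_{Y|Z}, a regular conditional distribution of Y given Z (so W is a measurable function of Z). Then W is auto-calibrated: P_{Y|W} = W almost surely, where P_{Y|W} is a regular conditional distribution of Y given W. -/

import Mathlib

open MeasureTheory ProbabilityTheory

noncomputable section

/-- The "identity-like" Markov kernel on `Measure 𝒴`: sends a probability measure to itself. -/
def probIdKernel (𝒴 : Type*) [MeasurableSpace 𝒴] [Nonempty 𝒴] :
    ProbabilityTheory.Kernel (Measure 𝒴) 𝒴 where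
  toFun m := if m Set.univ = 1 then m else Measure.dirac (Classical.arbitrary 𝒴)
  measurable' := by
    refine Measurable.ite ?_ measurable_id measurable_const
    exact (Measure.measurable_coe MeasurableSet.univ) (measurableSet_singleton 1)

lemma probIdKernel_apply {𝒴 : Type*} [MeasurableSpace 𝒴] [Nonempty 𝒴]
    (m : Measure 𝒴) (h : m Set.univ = 1) : probIdKernel 𝒴 m = m := by
  show (if m Set.univ = 1 then m else _) = m
  rw [if_pos h]

instance {𝒴 : Type*} [MeasurableSpace 𝒴] [Nonempty 𝒴] :
    IsMarkovKernel (probIdKernel 𝒴) := by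
  constructor
  intro m
  by_cases h : m Set.univ = 1
  · rw [probIdKernel_apply m h]; exact ⟨h⟩
  · show IsProbabilityMeasure (if m Set.univ = 1 then m else _)
    rw [if_neg h]; infer_instance

/-- **Auto-calibration of conditional laws.**
Let `Y` be a target random variable with values in a standard Borel space, `Z` any random
variable jointly distributed with `Y`, and let `W = P_{Y|Z}` be (a regular conditional
distribution of `Y` given `Z`, evaluated along `Z`, so `W` is a measurable function of `Z`).
Then `W` is auto-calibrated: `P_{Y|W} = W` almost surely. -/
theorem conditional_law_is_auto_calibrated
    {Ω 𝒵 𝒴 : Type*} [MeasurableSpace Ω] [MeasurableSpace 𝒵]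
    [MeasurableSpace 𝒴] [StandardBorelSpace 𝒴] [Nonempty 𝒴]
    (μ : Measure Ω) [IsProbabilityMeasure μ]
    (Y : Ω → 𝒴) (Z : Ω → 𝒵)
    (hY : Measurable Y) (hZ : Measurable Z)
    (W : Ω → Measure 𝒴)
    (hW : ∀ ω, W ω = condDistrib Y Z μ (Z ω)) :
    ∀ᵐ ω ∂μ, condDistrib Y W μ (W ω) = W ω := by
  have hWm : Measurable W := by
    have : W = fun ω => condDistrib Y Z μ (Z ω) := funext hW
    rw [this]
    exact (condDistrib Y Z μ).measurable.comp hZ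
  have hWuniv : ∀ ω, W ω Set.univ = 1 := by
    intro ω
    rw [hW ω]
    exact measure_univ
  have hκW : ∀ ω, probIdKernel 𝒴 (W ω) = W ω := fun ω => probIdKernel_apply _ (hWuniv ω)
  set κ := probIdKernel 𝒴 with hκ
  -- the key compProd identity
  have hmap : μ.map (fun ω => (W ω, Y ω)) = μ.map W ⊗ₘ κ := by
    have hWYm : Measurable fun ω => (W ω, Y ω) := hWm.prodMk hY
    refine ext_of_generate_finite _ generateFrom_prod.symm isPiSystem_prod ?_ ?_
    · rintro u ⟨s, hs, t, ht, rfl⟩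
      simp only [Set.mem_setOf_eq] at hs ht
      rw [Measure.map_apply hWYm (hs.prod ht), Measure.compProd_apply (hs.prod ht)]
      have h1 : ∀ m, κ m (Prod.mk m ⁻¹' s ×ˢ t) = s.indicator (fun m => κ m t) m := by
        intro m
        by_cases hm : m ∈ s
        · simp [hm, Set.mk_preimage_prod_right hm]
        · simp [hm, Set.mk_preimage_prod_right_eq_empty hm]
      simp_rw [h1]
      rw [lintegral_map (Measurable.indicator (κ.measurable_coe ht) hs) hWm]
      have h2 : ∀ ω, s.indicator (fun m => κ m t) (W ω)
          = (W ⁻¹' s).indicator (fun ω => κ (W ω) t) ω := by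
        intro ω
        by_cases hω : W ω ∈ s <;> simp [Set.indicator, hω]
      simp_rw [h2]
      rw [lintegral_indicator (hWm hs)]
      have h3 : ∀ ω, κ (W ω) t = condDistrib Y Z μ (Z ω) t := by
        intro ω; rw [hκW ω, hW ω]
      simp_rw [h3]
      have hsm : MeasurableSet[MeasurableSpace.comap Z inferInstance] (W ⁻¹' s) := by
        refine ⟨condDistrib Y Z μ ⁻¹' s, (condDistrib Y Z μ).measurable hs, ?_⟩
        ext ω; simp [hW ω]
      rw [setLIntegral_condDistrib_of_measurableSet hZ hY.aemeasurable ht hsm]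
      rfl
    · rw [Measure.map_apply hWYm MeasurableSet.univ, Set.preimage_univ, measure_univ]
      have : IsProbabilityMeasure (μ.map W) := Measure.isProbabilityMeasure_map hWm.aemeasurable
      simp
  have h := condDistrib_ae_eq_of_measure_eq_compProd_of_measurable hWm hY (κ := κ) hmap
  have h' := ae_of_ae_map hWm.aemeasurable h
  filter_upwards [h'] with ω hω
  rw [hω, hκW ω]
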